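/- arXiv:2301.08818 — 2 statements merged into one kernel-verified Lean document; each statement's English description precedes it below -/
import Mathlib

section
/- Let A be an n×n complex matrix of index k and let m ≥ 1 be an integer. Then A (A^{#_m})^2 = A^{#_m}. -/
open Matrix

/-- `X` is the Moore–Penrose inverse of `A` (four Penrose equations). -/
def MoorePenroseOf {n : ℕ} (A X : Matrix (Fin n) (Fin n) ℂ) : Prop :=
  A * X * A = A ∧ X * A * X = X ∧ (A * X)ᴴ = A * X ∧ (X * A)ᴴ = X * A

/-- Column space of a square complex matrix. -/
noncomputable def colSpace {n : ℕ} (A : Matrix (Fin n) (Fin n) ℂ) : Submodule ℂ (Fin n → ℂ) :=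
  LinearMap.range A.mulVecLin

/-- Null space of a square complex matrix. -/
noncomputable def nullSpace {n : ℕ} (A : Matrix (Fin n) (Fin n) ℂ) : Submodule ℂ (Fin n → ℂ) :=
  LinearMap.ker A.mulVecLin

/-- `k` is the index of `A`: the smallest nonnegative integer with
`rank(A^k) = rank(A^(k+1))`. -/
def HasIndex {n : ℕ} (A : Matrix (Fin n) (Fin n) ℂ) (k : ℕ) : Prop :=
  (A ^ k).rank = (A ^ (k + 1)).rank ∧ ∀ j < k, (A ^ j).rank ≠ (A ^ (j + 1)).rank

/-- `X` is the core-EP inverse of `A` (where `k = Ind(A)`): `XAX = X` and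
`R(X) = R(Xᴴ) = R(A^k)`. -/
def IsCoreEP {n : ℕ} (A X : Matrix (Fin n) (Fin n) ℂ) (k : ℕ) : Prop :=
  X * A * X = X ∧ colSpace X = colSpace (A ^ k) ∧ colSpace Xᴴ = colSpace (A ^ k)

private lemma colSpace_le_of_factor {n : ℕ} (C D : Matrix (Fin n) (Fin n) ℂ) :
    colSpace (C * D) ≤ colSpace C := by
  rw [colSpace, colSpace, Matrix.mulVecLin_mul]
  exact LinearMap.range_comp_le_range _ _

private lemma exists_factor {n : ℕ} {B C : Matrix (Fin n) (Fin n) ℂ}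
    (h : colSpace B ≤ colSpace C) : ∃ D, B = C * D := by
  obtain ⟨s, hs⟩ := LinearMap.exists_rightInverse_of_surjective
    (C.mulVecLin.rangeRestrict)
    (LinearMap.range_eq_top.2 C.mulVecLin.surjective_rangeRestrict)
  set f' := B.mulVecLin.codRestrict (LinearMap.range C.mulVecLin)
    (fun x => h (LinearMap.mem_range_self _ x)) with hf'
  refine ⟨LinearMap.toMatrix' (s ∘ₗ f'), Matrix.toLin'.injective ?_⟩
  rw [Matrix.toLin'_mul, Matrix.toLin'_toMatrix']
  refine LinearMap.ext fun v => ?_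
  have h2 : (C.mulVecLin.rangeRestrict) (s (f' v)) = f' v := LinearMap.congr_fun hs (f' v)
  have h3 : C.mulVecLin (s (f' v)) = (f' v : Fin n → ℂ) := congrArg Subtype.val h2
  simp only [Matrix.toLin'_apply', LinearMap.comp_apply, h3, hf', LinearMap.codRestrict_apply]
  exact h3.symm

private lemma colSpace_mul_map {n : ℕ} (M N : Matrix (Fin n) (Fin n) ℂ) :
    colSpace (M * N) = Submodule.map M.mulVecLin (colSpace N) := by
  rw [colSpace, colSpace, Matrix.mulVecLin_mul, LinearMap.range_comp]

/-- `A (A^{#_m})^2 = A^{#_m}`. -/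
theorem stmt_5 {n k m : ℕ} (hm : 1 ≤ m)
    (A CEP AmDag : Matrix (Fin n) (Fin n) ℂ)
    (hInd : HasIndex A k)
    (hCEP : IsCoreEP A CEP k)
    (hMP : MoorePenroseOf (A ^ m) AmDag) :
    A * (CEP ^ (m + 1) * A ^ m * (A ^ m * AmDag)) ^ 2 =
      CEP ^ (m + 1) * A ^ m * (A ^ m * AmDag) := by
  obtain ⟨hXAX, hcolX, -⟩ := hCEP
  obtain ⟨hMP1, -, -, -⟩ := hMP
  -- the chain of column spaces stabilizes at k
  have hk1 : colSpace (A ^ (k + 1)) = colSpace (A ^ k) := by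
    refine Submodule.eq_of_le_of_finrank_eq ?_ ?_
    · rw [pow_succ]; exact colSpace_le_of_factor _ _
    · exact (hInd.1).symm
  have hkj : ∀ j, k ≤ j → colSpace (A ^ j) = colSpace (A ^ k) := by
    intro j hj
    induction j with
    | zero => simp_all
    | succ j ih =>
      rcases Nat.lt_or_ge k (j + 1) with h | h
      · have hkj' : k ≤ j := Nat.lt_succ_iff.mp h
        rw [pow_succ', colSpace_mul_map, ih hkj', ← colSpace_mul_map, ← pow_succ', hk1]
      · have : k = j + 1 := le_antisymm hj h
        rw [this]
  -- factorizations
  obtain ⟨B, hB⟩ : ∃ B, CEP = A ^ k * B := exists_factor hcolX.le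
  obtain ⟨B', hB'⟩ : ∃ B', A ^ k = CEP * B' := exists_factor hcolX.ge
  obtain ⟨C, hC⟩ : ∃ C, A ^ k = A ^ (k + 1) * C := exists_factor hk1.ge
  obtain ⟨Q, hQ⟩ : ∃ Q, A ^ k = A ^ m * Q := by
    refine exists_factor ?_
    rcases le_or_gt m k with h | h
    · have : A ^ k = A ^ m * A ^ (k - m) := by
        rw [← pow_add, Nat.add_sub_cancel' h]
      rw [this]; exact colSpace_le_of_factor _ _
    · exact (hkj m h.le).ge
  -- key identities
  have hXA : CEP * A ^ (k + 1) = A ^ k := by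
    calc CEP * A ^ (k + 1) = CEP * (A * (CEP * B')) := by rw [← hB', ← pow_succ']
      _ = CEP * A * CEP * B' := by simp only [mul_assoc]
      _ = CEP * B' := by rw [hXAX]
      _ = A ^ k := hB'.symm
  have hAXA : A * CEP * A ^ k = A ^ k := by
    calc A * CEP * A ^ k = A * (CEP * A ^ (k + 1)) * C := by
          rw [hC]; simp only [mul_assoc]
      _ = A * A ^ k * C := by rw [hXA]
      _ = A ^ (k + 1) * C := by rw [← pow_succ']
      _ = A ^ k := hC.symm
  have hAXX : A * CEP * CEP = CEP := by
    calc A * CEP * CEP = A * CEP * A ^ k * B := by rw [hB, ← mul_assoc]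
      _ = A ^ k * B := by rw [hAXA]
      _ = CEP := hB.symm
  have hAXm : ∀ j, A * CEP ^ (j + 2) = CEP ^ (j + 1) := by
    intro j
    induction j with
    | zero => simpa [pow_succ, ← mul_assoc] using hAXX
    | succ j ih =>
      calc A * CEP ^ (j + 3) = A * CEP ^ (j + 2) * CEP := by rw [pow_succ, ← mul_assoc]
        _ = CEP ^ (j + 1) * CEP := by rw [ih]
        _ = CEP ^ (j + 2) := by rw [← pow_succ]
  have hXAk : ∀ j, CEP ^ j * A ^ (k + j) = A ^ k := by
    intro j
    induction j with
    | zero => simp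
    | succ j ih =>
      have hsplit : A ^ (k + (j + 1)) = A ^ (k + 1) * A ^ j := by
        rw [← pow_add]; ring_nf
      calc CEP ^ (j + 1) * A ^ (k + (j + 1))
          = CEP ^ j * (CEP * A ^ (k + 1)) * A ^ j := by
            rw [hsplit, pow_succ]; simp only [mul_assoc]
        _ = CEP ^ j * A ^ k * A ^ j := by rw [hXA]
        _ = CEP ^ j * A ^ (k + j) := by rw [mul_assoc, ← pow_add]
        _ = A ^ k := ih
  have hXmAmX : CEP ^ m * A ^ m * CEP = CEP := by
    calc CEP ^ m * A ^ m * CEP = CEP ^ m * (A ^ m * A ^ k) * B := by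
          rw [hB]; simp only [mul_assoc]
      _ = CEP ^ m * A ^ (k + m) * B := by rw [← pow_add, add_comm]
      _ = A ^ k * B := by rw [hXAk m]
      _ = CEP := hB.symm
  have hPX : A ^ m * AmDag * CEP = CEP := by
    calc A ^ m * AmDag * CEP = A ^ m * AmDag * A ^ m * (Q * B) := by
          rw [hB, hQ]; simp only [mul_assoc]
      _ = A ^ m * (Q * B) := by rw [hMP1]
      _ = CEP := by rw [← mul_assoc, ← hQ, ← hB]
  have hPXm : A ^ m * AmDag * CEP ^ (m + 1) = CEP ^ (m + 1) := by
    calc A ^ m * AmDag * CEP ^ (m + 1) = A ^ m * AmDag * CEP * CEP ^ m := by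
          rw [pow_succ']; simp only [mul_assoc]
      _ = CEP * CEP ^ m := by rw [hPX]
      _ = CEP ^ (m + 1) := by rw [← pow_succ']
  -- final computation
  obtain ⟨m', rfl⟩ : ∃ m', m = m' + 1 := ⟨m - 1, by omega⟩
  calc A * (CEP ^ (m' + 1 + 1) * A ^ (m' + 1) * (A ^ (m' + 1) * AmDag)) ^ 2
      = A * CEP ^ (m' + 2) * A ^ (m' + 1) *
          (A ^ (m' + 1) * AmDag * CEP ^ (m' + 2)) * A ^ (m' + 1) *
          (A ^ (m' + 1) * AmDag) := by
        rw [pow_two]; simp only [mul_assoc]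
    _ = CEP ^ (m' + 1) * A ^ (m' + 1) * CEP ^ (m' + 2) * A ^ (m' + 1) *
          (A ^ (m' + 1) * AmDag) := by rw [hAXm m', hPXm]
    _ = (CEP ^ (m' + 1) * A ^ (m' + 1) * CEP) *
          (CEP ^ (m' + 1) * A ^ (m' + 1) * (A ^ (m' + 1) * AmDag)) := by
        rw [pow_succ' CEP (m' + 1)]; simp only [mul_assoc]
    _ = CEP * (CEP ^ (m' + 1) * A ^ (m' + 1) * (A ^ (m' + 1) * AmDag)) := by
        rw [hXmAmX]
    _ = CEP ^ (m' + 1 + 1) * A ^ (m' + 1) * (A ^ (m' + 1) * AmDag) := by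
        rw [pow_succ' CEP (m' + 1)]; simp only [mul_assoc]
end

section
/- Let A be an n×n complex matrix of index k, let m ≥ 1 be an integer, and let l be an integer with l ≥ k. Then A^{#_m} A^{l+1} = A^l. -/
open Matrix

lemma aux_ext {n : ℕ} {A B : Matrix (Fin n) (Fin n) ℂ}
    (h : ∀ x, A.mulVec x = B.mulVec x) : A = B := by
  ext i j
  have := congrFun (h (Pi.single j 1)) i
  simpa [Matrix.mulVec, dotProduct, Pi.single_apply, mul_comm] using this

lemma colSpace_mul {n : ℕ} (A B : Matrix (Fin n) (Fin n) ℂ) :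
    colSpace (A * B) = Submodule.map A.mulVecLin (colSpace B) := by
  unfold colSpace
  rw [Matrix.mulVecLin_mul, LinearMap.range_comp]

lemma colSpace_mul_le {n : ℕ} (A B : Matrix (Fin n) (Fin n) ℂ) :
    colSpace (A * B) ≤ colSpace A := by
  rintro x ⟨y, rfl⟩
  exact ⟨B.mulVec y, by simp [Matrix.mulVecLin_apply, Matrix.mulVec_mulVec]⟩

lemma mem_colSpace {n : ℕ} (A : Matrix (Fin n) (Fin n) ℂ) (x : Fin n → ℂ) :
    A.mulVec x ∈ colSpace A := ⟨x, by simp [Matrix.mulVecLin_apply]⟩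

lemma colSpace_pow_stable {n k : ℕ} {A : Matrix (Fin n) (Fin n) ℂ}
    (hInd : HasIndex A k) : ∀ j, k ≤ j → colSpace (A ^ j) = colSpace (A ^ k) := by
  have base : colSpace (A ^ (k + 1)) = colSpace (A ^ k) := by
    refine Submodule.eq_of_le_of_finrank_eq ?_ ?_
    · rw [pow_succ]
      exact colSpace_mul_le _ _
    · exact hInd.1.symm
  intro j hj
  induction j, hj using Nat.le_induction with
  | base => rfl
  | succ j hj ih =>
    have h1 : A ^ (j + 1) = A ^ (j - k) * A ^ (k + 1) := by
      rw [← pow_add]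
      congr 1
      omega
    have h2 : A ^ j = A ^ (j - k) * A ^ k := by
      rw [← pow_add]
      congr 1
      omega
    calc colSpace (A ^ (j + 1))
        = Submodule.map (A ^ (j - k)).mulVecLin (colSpace (A ^ (k + 1))) := by
          rw [← colSpace_mul, ← h1]
      _ = Submodule.map (A ^ (j - k)).mulVecLin (colSpace (A ^ k)) := by rw [base]
      _ = colSpace (A ^ j) := by rw [← colSpace_mul, ← h2]
      _ = colSpace (A ^ k) := ih

/-- for `l ≥ k`, `A^{#_m} A^{l+1} = A^l`. -/
theorem stmt_6 {n k m l : ℕ} (hm : 1 ≤ m) (hl : k ≤ l)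
    (A CEP AmDag : Matrix (Fin n) (Fin n) ℂ)
    (hInd : HasIndex A k)
    (hCEP : IsCoreEP A CEP k)
    (hMP : MoorePenroseOf (A ^ m) AmDag) :
    CEP ^ (m + 1) * A ^ m * (A ^ m * AmDag) * A ^ (l + 1) = A ^ l := by
  -- colSpace of A^(l+1) is contained in colSpace of A^m
  have hsub : colSpace (A ^ (l + 1)) ≤ colSpace (A ^ m) := by
    set j := max m (l + 1) with hj
    have h1 : colSpace (A ^ (l + 1)) = colSpace (A ^ k) :=
      colSpace_pow_stable hInd _ (by omega)
    have h2 : colSpace (A ^ j) = colSpace (A ^ k) :=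
      colSpace_pow_stable hInd _ (by omega)
    have h3 : colSpace (A ^ j) ≤ colSpace (A ^ m) := by
      have : A ^ j = A ^ m * A ^ (j - m) := by
        rw [← pow_add]; congr 1; omega
      rw [this]; exact colSpace_mul_le _ _
    rw [h1, ← h2]; exact h3
  -- projector step : (A^m * AmDag) * A^(l+1) = A^(l+1)
  have hproj : (A ^ m * AmDag) * A ^ (l + 1) = A ^ (l + 1) := by
    apply aux_ext
    intro x
    obtain ⟨y, hy⟩ := hsub (mem_colSpace (A ^ (l + 1)) x)
    simp only [Matrix.mulVecLin_apply] at hy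
    calc ((A ^ m * AmDag) * A ^ (l + 1)).mulVec x
        = (A ^ m * AmDag).mulVec ((A ^ (l + 1)).mulVec x) := by
          rw [Matrix.mulVec_mulVec]
      _ = (A ^ m * AmDag).mulVec ((A ^ m).mulVec y) := by rw [hy]
      _ = (A ^ m * AmDag * A ^ m).mulVec y := by rw [Matrix.mulVec_mulVec]
      _ = (A ^ m).mulVec y := by rw [hMP.1]
      _ = (A ^ (l + 1)).mulVec x := hy
  -- key step : CEP * A^(j+1) = A^j for j ≥ k
  have hkey : ∀ j, k ≤ j → CEP * A ^ (j + 1) = A ^ j := by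
    intro j hj
    apply aux_ext
    intro x
    have hx : (A ^ j).mulVec x ∈ colSpace CEP := by
      rw [hCEP.2.1, ← colSpace_pow_stable hInd j hj]
      exact mem_colSpace _ _
    obtain ⟨u, hu⟩ := hx
    simp only [Matrix.mulVecLin_apply] at hu
    calc (CEP * A ^ (j + 1)).mulVec x
        = (CEP * (A * A ^ j)).mulVec x := by rw [← pow_succ']
      _ = (CEP * A).mulVec ((A ^ j).mulVec x) := by
          rw [Matrix.mulVec_mulVec, mul_assoc]
      _ = (CEP * A).mulVec (CEP.mulVec u) := by rw [hu]
      _ = (CEP * A * CEP).mulVec u := by rw [Matrix.mulVec_mulVec]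
      _ = CEP.mulVec u := by rw [hCEP.1]
      _ = (A ^ j).mulVec x := hu
  -- iterated key step
  have hiter : ∀ i j, k ≤ j → CEP ^ i * A ^ (i + j) = A ^ j := by
    intro i
    induction i with
    | zero => intro j hj; simp
    | succ i ih =>
      intro j hj
      have he : i + 1 + j = i + (j + 1) := by omega
      rw [he, pow_succ', mul_assoc, ih (j + 1) (by omega), hkey j hj]
  calc CEP ^ (m + 1) * A ^ m * (A ^ m * AmDag) * A ^ (l + 1)
      = CEP ^ (m + 1) * A ^ m * ((A ^ m * AmDag) * A ^ (l + 1)) := by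
        rw [mul_assoc]
    _ = CEP ^ (m + 1) * (A ^ m * A ^ (l + 1)) := by rw [hproj, mul_assoc]
    _ = CEP ^ (m + 1) * A ^ (m + 1 + l) := by rw [← pow_add]; congr 2; omega
    _ = A ^ l := hiter (m + 1) l hl
end
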